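/- For any real numbers t_1 < t_2 < ... < t_n, the Vandermonde vectors b(t_i) = (1, t_i, ..., t_i^{n-1}) form a basis of R^n; consequently, for α_1,...,α_n ∈ GL_n(R), the determinant det(α_1 b(ε_1), ..., α_n b(ε_n)) is a nonzero element of the iterated Laurent series field R((ε_1))...((ε_n)). -/

import Mathlib

open Matrix
open scoped BigOperators

noncomputable section

/-- The iterated Laurent series field `ℝ((ε_1))...((ε_n))`, together with its field
structure (built by recursion). -/
def IterData : ℕ → Σ' (T : Type), Field T
  | 0 => ⟨ℝ, inferInstance⟩
  | (n + 1) =>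
    let p := IterData n
    letI : Field p.1 := p.2
    ⟨LaurentSeries p.1, inferInstance⟩

/-- The iterated Laurent series field `F = ℝ((ε_1))...((ε_n))`. -/
def IterLaurent (n : ℕ) : Type := (IterData n).1

instance (n : ℕ) : Field (IterLaurent n) := (IterData n).2

/-- `IterLaurent 0` is definitionally `ℝ`. -/
def toR (x : IterLaurent 0) : ℝ := x

/-- `IterLaurent (n+1)` is definitionally the Laurent series field over `IterLaurent n`. -/
def toLS {n : ℕ} (x : IterLaurent (n + 1)) : LaurentSeries (IterLaurent n) := x

/-- An element of `ℝ((ε_1))...((ε_n))` is *positive* if it is nonzero and the leading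
coefficient (the coefficient of the smallest exponent, exponents being ordered
lexicographically with `ε_{i+1}` infinitesimal with respect to `ε_i`) is positive. -/
def IterPos : ∀ n : ℕ, IterLaurent n → Prop
  | 0, x => 0 < toR x
  | (n + 1), x => toLS x ≠ 0 ∧ IterPos n ((toLS x).coeff (toLS x).order)

/-- The order relation on `ℝ((ε_1))...((ε_n))`: `x < y` iff `y - x` is positive. -/
def llt (n : ℕ) (x y : IterLaurent n) : Prop := IterPos n (y - x)

/-- The embedding of `ℝ` into `ℝ((ε_1))...((ε_n))` as constant series. -/
def realEmb : ∀ n : ℕ, ℝ → IterLaurent n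
  | 0, r => r
  | (n + 1), r => (HahnSeries.C (realEmb n r) : LaurentSeries (IterLaurent n))

/-- The variable `ε_{i+1}` as an element of `ℝ((ε_1))...((ε_n))` (for `i : Fin n`). -/
def epsV : ∀ n : ℕ, Fin n → IterLaurent n
  | (n + 1), i =>
    if h : (i : ℕ) < n then
      (HahnSeries.C (epsV n ⟨i, h⟩) : LaurentSeries (IterLaurent n))
    else (HahnSeries.single (1 : ℤ) 1 : LaurentSeries (IterLaurent n))

noncomputable def phi : ∀ n : ℕ, MvPolynomial (Fin n) ℝ →+* IterLaurent n
  | 0 => (MvPolynomial.isEmptyRingEquiv ℝ (Fin 0)).toRingHom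
  | (n + 1) =>
    (((HahnSeries.ofPowerSeries ℤ (IterLaurent n)).comp
        Polynomial.coeToPowerSeries.ringHom).comp
      ((Polynomial.mapRingHom (phi n)).comp
        (((MvPolynomial.finSuccEquiv ℝ n).toAlgHom.toRingHom).comp
          (MvPolynomial.rename (finRotate (n + 1))).toRingHom)) :
      MvPolynomial (Fin (n + 1)) ℝ →+* LaurentSeries (IterLaurent n))

lemma phi_succ_apply (n : ℕ) (p : MvPolynomial (Fin (n+1)) ℝ) :
    phi (n+1) p = (HahnSeries.ofPowerSeries ℤ (IterLaurent n))
      (Polynomial.coeToPowerSeries.ringHom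
        ((Polynomial.mapRingHom (phi n))
          ((MvPolynomial.finSuccEquiv ℝ n)
            (MvPolynomial.rename (finRotate (n + 1)) p)))) := rfl

lemma phi_injective : ∀ n, Function.Injective (phi n)
  | 0 => (MvPolynomial.isEmptyRingEquiv ℝ (Fin 0)).injective
  | (n + 1) => by
    have h1 : Function.Injective (Polynomial.map (phi n)) :=
      Polynomial.map_injective _ (phi_injective n)
    intro p q h
    rw [phi_succ_apply, phi_succ_apply] at h
    exact (MvPolynomial.rename_injective _ (finRotate (n+1)).injective)
      ((MvPolynomial.finSuccEquiv ℝ n).injective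
        (h1 ((Polynomial.coe_injective _) (HahnSeries.ofPowerSeries_injective h))))

lemma phi_C : ∀ n (r : ℝ), phi n (MvPolynomial.C r) = realEmb n r
  | 0, r => by
    show (MvPolynomial.isEmptyRingEquiv ℝ (Fin 0)) (MvPolynomial.C r) = realEmb 0 r
    simp [MvPolynomial.isEmptyRingEquiv_apply, realEmb]
    exact MvPolynomial.coeff_zero_C r
  | (n + 1), r => by
    rw [phi_succ_apply]
    rw [MvPolynomial.rename_C]
    rw [show (MvPolynomial.finSuccEquiv ℝ n) (MvPolynomial.C r)
        = Polynomial.C (MvPolynomial.C r) by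
      simp only [MvPolynomial.finSuccEquiv_apply, MvPolynomial.eval₂Hom_C]; rfl]
    rw [Polynomial.coe_mapRingHom, Polynomial.map_C,
      Polynomial.coeToPowerSeries.ringHom_apply, Polynomial.coe_C,
      HahnSeries.ofPowerSeries_C, phi_C n r]
    rfl

lemma phi_X : ∀ n (i : Fin n), phi n (MvPolynomial.X i) = epsV n i
  | (n + 1), i => by
    rw [phi_succ_apply, MvPolynomial.rename_X]
    induction i using Fin.lastCases with
    | last =>
      rw [finRotate_last, MvPolynomial.finSuccEquiv_X_zero]
      rw [Polynomial.coe_mapRingHom, Polynomial.map_X,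
        Polynomial.coeToPowerSeries.ringHom_apply, Polynomial.coe_X,
        HahnSeries.ofPowerSeries_X]
      show _ = if h : ((Fin.last n : Fin (n+1)) : ℕ) < n then _ else _
      simp
      rfl
    | cast j =>
      rw [finRotate_succ_apply, Fin.coeSucc_eq_succ, MvPolynomial.finSuccEquiv_X_succ,
        Polynomial.coe_mapRingHom, Polynomial.map_C,
        Polynomial.coeToPowerSeries.ringHom_apply, Polynomial.coe_C,
        HahnSeries.ofPowerSeries_C, phi_X n j]
      show _ = if h : ((j.castSucc : Fin (n+1)) : ℕ) < n then
          (HahnSeries.C (epsV n ⟨(j.castSucc : ℕ), h⟩) : LaurentSeries (IterLaurent n)) else _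
      rw [dif_pos (by simp [j.isLt])]
      exact congrArg _ (congrArg (epsV n) (Fin.ext rfl))

lemma vand_li (n : ℕ) (t : Fin n → ℝ) (ht : Function.Injective t) :
    LinearIndependent ℝ (fun (i : Fin n) (j : Fin n) => t i ^ (j : ℕ)) :=
  Matrix.linearIndependent_rows_iff_isUnit.mpr
    ((Matrix.isUnit_iff_isUnit_det _).mpr
      (isUnit_iff_ne_zero.mpr (Matrix.det_vandermonde_ne_zero_iff.mpr ht)))

lemma vand_span (n : ℕ) (t : Fin n → ℝ) (ht : Function.Injective t) :
    Submodule.span ℝ (Set.range fun (i : Fin n) (j : Fin n) => t i ^ (j : ℕ)) = ⊤ :=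
  (vand_li n t ht).span_eq_top_of_card_eq_finrank'
    (by simp [Module.finrank_fintype_fun_eq_card])

lemma bspan (n : ℕ) :
    Submodule.span ℝ (Set.range fun (s : ℝ) (j : Fin n) => s ^ (j : ℕ)) = ⊤ := by
  rw [eq_top_iff, ← vand_span n (fun i : Fin n => (i : ℝ))
    (fun a b hab => Fin.ext (Nat.cast_injective hab))]
  refine Submodule.span_mono ?_
  rintro _ ⟨i, rfl⟩
  exact ⟨(i : ℝ), rfl⟩

lemma greedy (n : ℕ) (α : Fin n → Matrix (Fin n) (Fin n) ℝ) (hα : ∀ i, IsUnit (α i).det) :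
    ∀ m : ℕ, ∀ hm : m ≤ n, ∃ t : Fin m → ℝ,
      LinearIndependent ℝ
        (fun j : Fin m => (α (Fin.castLE hm j)).mulVec (fun i : Fin n => t j ^ (i : ℕ)))
  | 0, hm => ⟨fun _ => 0, linearIndependent_empty_type⟩
  | (m + 1), hm => by
    have hm' : m ≤ n := Nat.le_of_succ_le hm
    obtain ⟨t, ht⟩ := greedy n α hα m hm'
    set v := fun j : Fin m => (α (Fin.castLE hm' j)).mulVec (fun i : Fin n => t j ^ (i : ℕ))
      with hv
    set k : Fin n := Fin.castLE hm (Fin.last m) with hk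
    have hWne : Submodule.span ℝ (Set.range v) ≠ ⊤ := by
      intro hEq
      have h1 : Module.finrank ℝ (Submodule.span ℝ (Set.range v)) ≤ m := by
        simpa [Set.finrank] using finrank_range_le_card v
      rw [hEq] at h1
      have h2 : Module.finrank ℝ (⊤ : Submodule ℝ (Fin n → ℝ)) = n := by
        simp [Module.finrank_fintype_fun_eq_card]
      omega
    have hsurj : Function.Surjective (α k).mulVec :=
      Matrix.mulVec_surjective_iff_isUnit.mpr ((Matrix.isUnit_iff_isUnit_det _).mpr (hα k))
    have hex : ∃ s : ℝ,
        (α k).mulVec (fun i : Fin n => s ^ (i : ℕ)) ∉ Submodule.span ℝ (Set.range v) := by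
      by_contra hc
      push_neg at hc
      apply hWne
      have h3 : Submodule.map ((α k).mulVecLin)
          (Submodule.span ℝ (Set.range fun (s : ℝ) (j : Fin n) => s ^ (j : ℕ)))
          ≤ Submodule.span ℝ (Set.range v) := by
        rw [Submodule.map_span, Submodule.span_le]
        rintro _ ⟨_, ⟨s, rfl⟩, rfl⟩
        exact hc s
      rw [bspan n, Submodule.map_top, LinearMap.range_eq_top.mpr
        (by exact hsurj)] at h3
      exact top_le_iff.mp h3
    obtain ⟨s, hs⟩ := hex
    set t' : Fin (m + 1) → ℝ := Fin.snoc t s with ht'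
    refine ⟨t', ?_⟩
    have hfam : (fun j : Fin (m + 1) =>
        (α (Fin.castLE hm j)).mulVec (fun i : Fin n => t' j ^ (i : ℕ)))
        = Fin.snoc v ((α k).mulVec (fun i : Fin n => s ^ (i : ℕ))) := by
      funext j
      induction j using Fin.lastCases with
      | last => simp only [ht', Fin.snoc_last, hk]
      | cast j =>
        simp only [ht', Fin.snoc_castSucc, hv]
        congr 1
    rw [hfam]
    exact linearIndependent_fin_snoc.mpr ⟨ht, hs⟩

theorem stmt12 (n : ℕ) :
    (∀ t : Fin n → ℝ, StrictMono t →
      LinearIndependent ℝ (fun (i : Fin n) (j : Fin n) => t i ^ (j : ℕ)) ∧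
      Submodule.span ℝ (Set.range fun (i : Fin n) (j : Fin n) => t i ^ (j : ℕ)) = ⊤) ∧
    (∀ α : Fin n → Matrix (Fin n) (Fin n) ℝ, (∀ i, IsUnit (α i).det) →
      (Matrix.of fun (r : Fin n) (j : Fin n) =>
        ∑ k : Fin n, realEmb n (α j r k) * (epsV n j) ^ (k : ℕ)).det ≠ 0) := by
  constructor
  · intro t ht
    exact ⟨vand_li n t ht.injective, vand_span n t ht.injective⟩
  · intro α hα
    obtain ⟨t, ht⟩ := greedy n α hα n le_rfl
    have hfam : LinearIndependent ℝ
        (fun j : Fin n => (α j).mulVec (fun i : Fin n => t j ^ (i : ℕ))) := ht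
    set Mt : Matrix (Fin n) (Fin n) ℝ :=
      Matrix.of fun r j => ∑ k : Fin n, α j r k * t j ^ (k : ℕ) with hMt
    have hrows : (fun j : Fin n => Mtᵀ j)
        = fun j : Fin n => (α j).mulVec (fun i : Fin n => t j ^ (i : ℕ)) := by
      funext j r
      simp [hMt, Matrix.mulVec, dotProduct, Matrix.transpose_apply]
    have hMtdet : Mt.det ≠ 0 := by
      have h1 : IsUnit Mtᵀ :=
        Matrix.linearIndependent_rows_iff_isUnit.mp ((show Mtᵀ.row = _ from hrows) ▸ hfam)
      have h2 : IsUnit Mt.det := by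
        rw [← Matrix.det_transpose]
        exact (Matrix.isUnit_iff_isUnit_det _).mp h1
      exact h2.ne_zero
    set P : Matrix (Fin n) (Fin n) (MvPolynomial (Fin n) ℝ) :=
      Matrix.of fun r j =>
        ∑ k : Fin n, MvPolynomial.C (α j r k) * (MvPolynomial.X j) ^ (k : ℕ) with hP
    have hPeval : (MvPolynomial.eval t).mapMatrix P = Mt := by
      rw [RingHom.mapMatrix_apply]
      funext r j
      simp [hP, hMt, Matrix.map_apply, map_sum]
    have hPdet : P.det ≠ 0 := by
      intro h0
      apply hMtdet
      rw [← hPeval, ← RingHom.map_det, h0, map_zero]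
    have hM : (Matrix.of fun (r : Fin n) (j : Fin n) =>
        ∑ k : Fin n, realEmb n (α j r k) * (epsV n j) ^ (k : ℕ)) = (phi n).mapMatrix P := by
      rw [RingHom.mapMatrix_apply]
      funext r j
      simp [hP, Matrix.map_apply, map_sum, _root_.map_mul, map_pow, phi_C, phi_X]
    rw [hM, ← RingHom.map_det]
    intro h
    exact hPdet (phi_injective n (h.trans (map_zero (phi n)).symm))
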